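/- Let K be a local field containing 𝔽_p with residue field k of size p^d, and let R = k[τ] be the twisted polynomial ring acting on K via k-scalar multiplication and τ acting as the p-th power map. Then the left R-module K/O_K is free, with basis given by the residue classes [ξ_j] of any fixed elements ξ_j ∈ K of normalized valuation -j, for all integers j > 0 not divisible by p. -/

import Mathlib

/-!
STATEMENT 6: Let `K` be a local field containing `𝔽_p` with residue field `k` of size `p^d`,
modelled as `K = k((t)) = LaurentSeries k` with normalized additive valuation
`v = HahnSeries.orderTop`, and let `R = k[τ]` be the twisted polynomial ring (`τ a = a^p τ`)
acting on `K` by `(∑ aᵢ τ^i)(ξ) = ∑ aᵢ ξ^{p^i}` (the scalars `k` act through the canonical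
section `HahnSeries.C`).  A twisted polynomial is recorded by an ordinary polynomial
`q : Polynomial k` (coefficient list), acting via `twistedPolyAct`.  The claim that `K/O_K` is
a free left `R`-module with basis the classes `[ξ_j]` (`ξ_j ∈ K` any elements with
`v ξ_j = -j`, for `j > 0` with `p ∤ j`) is expressed by: every `m : K` has a unique
`R`-coefficient family `c` (finitely supported) with `m - ∑_j c_j(ξ_j) ∈ O_K`.
-/

/-- Action of the twisted polynomial `∑ qᵢ τ^i` on `ξ`. -/
noncomputable def twistedPolyAct (p : ℕ) {k : Type*} [Field k]
    (q : Polynomial k) (ξ : LaurentSeries k) : LaurentSeries k :=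
  ∑ i ∈ Finset.range (q.natDegree + 1), HahnSeries.C (q.coeff i) * ξ ^ (p ^ i)

section Aux

variable {p : ℕ} {k : Type*} [Field k]

lemma twistedPolyAct_eq_sum (q : Polynomial k) (x : LaurentSeries k) :
    twistedPolyAct p q x = q.sum fun i a => HahnSeries.C a * x ^ (p ^ i) :=
  (Polynomial.sum_over_range (f := fun i a => HahnSeries.C a * x ^ (p ^ i)) q
    (fun n => by simp)).symm

lemma twistedPolyAct_zero (x : LaurentSeries k) : twistedPolyAct p (0 : Polynomial k) x = 0 := by
  rw [twistedPolyAct_eq_sum, Polynomial.sum_zero_index]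

lemma twistedPolyAct_add (q r : Polynomial k) (x : LaurentSeries k) :
    twistedPolyAct p (q + r) x = twistedPolyAct p q x + twistedPolyAct p r x := by
  simp only [twistedPolyAct_eq_sum]
  exact Polynomial.sum_add_index q r _ (by simp) (by intros; rw [map_add, add_mul])

lemma twistedPolyAct_monomial (i : ℕ) (a : k) (x : LaurentSeries k) :
    twistedPolyAct p (Polynomial.monomial i a) x = HahnSeries.C a * x ^ (p ^ i) := by
  rw [twistedPolyAct_eq_sum]
  exact Polynomial.sum_monomial_index a _ (by simp)

/-- The candidate representation map. -/
noncomputable def Tfun (p : ℕ) {k : Type*} [Field k]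
    (ξ : {j : ℕ // 0 < j ∧ ¬ p ∣ j} → LaurentSeries k)
    (c : {j : ℕ // 0 < j ∧ ¬ p ∣ j} →₀ Polynomial k) : LaurentSeries k :=
  c.sum fun j q => twistedPolyAct p q (ξ j)

variable {ξ : {j : ℕ // 0 < j ∧ ¬ p ∣ j} → LaurentSeries k}

lemma Tfun_zero : Tfun p ξ 0 = 0 := Finsupp.sum_zero_index

lemma Tfun_add (c₁ c₂ : {j : ℕ // 0 < j ∧ ¬ p ∣ j} →₀ Polynomial k) :
    Tfun p ξ (c₁ + c₂) = Tfun p ξ c₁ + Tfun p ξ c₂ :=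
  Finsupp.sum_add_index' (fun j => twistedPolyAct_zero (ξ j))
    (fun j q r => twistedPolyAct_add q r (ξ j))

lemma Tfun_single (j₀ : {j : ℕ // 0 < j ∧ ¬ p ∣ j}) (q : Polynomial k) :
    Tfun p ξ (Finsupp.single j₀ q) = twistedPolyAct p q (ξ j₀) :=
  Finsupp.sum_single_index (twistedPolyAct_zero (ξ j₀))

lemma Tfun_sub (c₁ c₂ : {j : ℕ // 0 < j ∧ ¬ p ∣ j} →₀ Polynomial k) :
    Tfun p ξ (c₁ - c₂) = Tfun p ξ c₁ - Tfun p ξ c₂ := by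
  have := Tfun_add (ξ := ξ) (c₁ - c₂) c₂
  rw [sub_add_cancel] at this
  rw [this]; ring

lemma coeff_finsum {ι : Type*} (s : Finset ι) (f : ι → LaurentSeries k) (g : ℤ) :
    (∑ i ∈ s, f i).coeff g = ∑ i ∈ s, (f i).coeff g :=
  map_sum (AddMonoidHom.mk' (fun x : LaurentSeries k => x.coeff g)
    (fun _ _ => HahnSeries.coeff_add)) f s

lemma C_mul_coeff (a : k) (x : LaurentSeries k) (g : ℤ) :
    (HahnSeries.C a * x).coeff g = a * x.coeff g := by
  rw [HahnSeries.C_mul_eq_smul, HahnSeries.coeff_smul, smul_eq_mul]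

lemma pow_order_spec {x : LaurentSeries k} {z : ℤ} (hx : x.orderTop = (z : WithTop ℤ))
    (N : ℕ) : x ^ N ≠ 0 ∧ (x ^ N).order = (N : ℤ) * z := by
  have hx0 : x ≠ 0 := by
    intro h; rw [h, HahnSeries.orderTop_zero] at hx; exact (WithTop.coe_ne_top hx.symm)
  have hord : x.order = z := by
    have := HahnSeries.order_eq_orderTop_of_ne_zero hx0
    rw [hx] at this
    exact_mod_cast this
  refine ⟨pow_ne_zero _ hx0, ?_⟩
  rw [HahnSeries.order_pow, hord]
  simp [nsmul_eq_mul]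

lemma factor_unique (hp : p.Prime) {j₁ j₂ i₁ i₂ : ℕ} (h₁ : ¬ p ∣ j₁) (h₂ : ¬ p ∣ j₂)
    (hj₁ : 0 < j₁) (he : j₁ * p ^ i₁ = j₂ * p ^ i₂) : j₁ = j₂ ∧ i₁ = i₂ := by
  have hj₂ : 0 < j₂ := by
    rcases Nat.eq_zero_or_pos j₂ with h | h
    · subst h; simp only [zero_mul] at he
      exact absurd he (Nat.mul_pos hj₁ (pow_pos hp.pos i₁)).ne'
    · exact h
  have hi : i₁ = i₂ := by
    have h1 : (j₁ * p ^ i₁).factorization p = i₁ := by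
      rw [Nat.factorization_mul hj₁.ne' (pow_ne_zero _ hp.pos.ne'),
        hp.factorization_pow]
      simp [Nat.factorization_eq_zero_of_not_dvd h₁]
    have h2 : (j₂ * p ^ i₂).factorization p = i₂ := by
      rw [Nat.factorization_mul hj₂.ne' (pow_ne_zero _ hp.pos.ne'),
        hp.factorization_pow]
      simp [Nat.factorization_eq_zero_of_not_dvd h₂]
    rw [he, h2] at h1
    exact h1.symm
  subst hi
  exact ⟨Nat.eq_of_mul_eq_mul_right (pow_pos hp.pos _) he, rfl⟩

end Aux

theorem quotient_free_over_twisted_polynomials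
    (p : ℕ) [Fact p.Prime] (k : Type*) [Field k] [Fintype k] [CharP k p] (d : ℕ)
    (hk : Fintype.card k = p ^ d)
    (ξ : {j : ℕ // 0 < j ∧ ¬ p ∣ j} → LaurentSeries k)
    (hξ : ∀ j, (ξ j).orderTop = ((-(j.1 : ℤ) : ℤ) : WithTop ℤ)) :
    ∀ m : LaurentSeries k,
      ∃! c : {j : ℕ // 0 < j ∧ ¬ p ∣ j} →₀ Polynomial k,
        0 ≤ (m - c.sum fun j q => twistedPolyAct p q (ξ j)).orderTop := by
  have hp : p.Prime := Fact.out
  -- basic facts about the basis elements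
  have hpow : ∀ (j : {j : ℕ // 0 < j ∧ ¬ p ∣ j}) (i : ℕ),
      ξ j ^ (p ^ i) ≠ 0 ∧ (ξ j ^ (p ^ i)).order = -((j.1 * p ^ i : ℕ) : ℤ) := by
    intro j i
    obtain ⟨h1, h2⟩ := pow_order_spec (hξ j) (p ^ i)
    refine ⟨h1, ?_⟩
    rw [h2]; push_cast; ring
  -- injectivity (uniqueness) key lemma
  have huniq : ∀ c : {j : ℕ // 0 < j ∧ ¬ p ∣ j} →₀ Polynomial k,
      0 ≤ (Tfun p ξ c).orderTop → c = 0 := by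
    intro c hc
    by_contra hc0
    -- the largest pole order appearing in c
    set F : {j : ℕ // 0 < j ∧ ¬ p ∣ j} → ℕ := fun j => (c j).support.sup fun i => j.1 * p ^ i
      with hF
    set n : ℕ := c.support.sup F with hn
    obtain ⟨j₀, hj₀mem, hnF⟩ := Finset.exists_mem_eq_sup c.support
      (Finsupp.support_nonempty_iff.mpr hc0) F
    have hcj₀ : c j₀ ≠ 0 := Finsupp.mem_support_iff.mp hj₀mem
    obtain ⟨i₀, hi₀mem, hFi⟩ := Finset.exists_mem_eq_sup (c j₀).support
      (Polynomial.support_nonempty.mpr hcj₀) (fun i => j₀.1 * p ^ i)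
    have hneq : n = j₀.1 * p ^ i₀ := by rw [hn, hnF, hF]; exact hFi
    have hnpos : 0 < n := by
      rw [hneq]; exact Nat.mul_pos j₀.2.1 (pow_pos hp.pos _)
    have hmax : ∀ j ∈ c.support, ∀ i ∈ (c j).support, j.1 * p ^ i ≤ n := by
      intro j hj i hi
      calc j.1 * p ^ i ≤ F j := Finset.le_sup (f := fun i => j.1 * p ^ i) hi
        _ ≤ n := Finset.le_sup hj
    -- compute the coefficient of Tfun at -n
    have hcoeff : (Tfun p ξ c).coeff (-(n : ℤ)) =
        ((c j₀).coeff i₀) * (ξ j₀ ^ (p ^ i₀)).coeff (-(n : ℤ)) := by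
      have : Tfun p ξ c = ∑ j ∈ c.support,
          ∑ i ∈ (c j).support, HahnSeries.C ((c j).coeff i) * ξ j ^ (p ^ i) := by
        unfold Tfun Finsupp.sum
        refine Finset.sum_congr rfl fun j _ => ?_
        show twistedPolyAct p (c j) (ξ j) = _
        rw [twistedPolyAct_eq_sum]; rfl
      rw [this, coeff_finsum]
      rw [Finset.sum_eq_single j₀ ?h1 ?h2]
      rotate_left
      · intro j hj hjne
        rw [coeff_finsum]
        refine Finset.sum_eq_zero fun i hi => ?_
        rw [C_mul_coeff]
        have hle : j.1 * p ^ i ≤ n := hmax j hj i hi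
        rcases lt_or_eq_of_le hle with hlt | heq
        · have : (ξ j ^ (p ^ i)).coeff (-(n : ℤ)) = 0 := by
            apply HahnSeries.coeff_eq_zero_of_lt_order
            rw [(hpow j i).2]
            exact_mod_cast neg_lt_neg (by exact_mod_cast hlt)
          rw [this, mul_zero]
        · exfalso
          have := factor_unique hp j.2.2 j₀.2.2 j.2.1 (heq.trans hneq)
          exact hjne (Subtype.ext this.1)
      · intro h; exact absurd hj₀mem h
      rw [coeff_finsum]
      rw [Finset.sum_eq_single i₀ ?h3 ?h4]
      · rw [C_mul_coeff]
      · intro i hi hine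
        rw [C_mul_coeff]
        have hle : j₀.1 * p ^ i ≤ n := hmax j₀ hj₀mem i hi
        rcases lt_or_eq_of_le hle with hlt | heq
        · have : (ξ j₀ ^ (p ^ i)).coeff (-(n : ℤ)) = 0 := by
            apply HahnSeries.coeff_eq_zero_of_lt_order
            rw [(hpow j₀ i).2]
            exact_mod_cast neg_lt_neg (by exact_mod_cast hlt)
          rw [this, mul_zero]
        · exfalso
          have := factor_unique hp j₀.2.2 j₀.2.2 j₀.2.1 (heq.trans hneq)
          exact hine this.2
      · intro h; exact absurd hi₀mem h
    have hcne : (Tfun p ξ c).coeff (-(n : ℤ)) ≠ 0 := by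
      rw [hcoeff]
      apply mul_ne_zero (Polynomial.mem_support_iff.mp hi₀mem)
      have h2 := (hpow j₀ i₀).2
      have := HahnSeries.coeff_order_eq_zero.not.mpr (hpow j₀ i₀).1
      rw [h2, ← hneq] at this
      exact this
    have : (Tfun p ξ c).orderTop ≤ ((-(n : ℤ) : ℤ) : WithTop ℤ) :=
      HahnSeries.orderTop_le_of_coeff_ne_zero hcne
    have hlt : ((-(n : ℤ) : ℤ) : WithTop ℤ) < 0 := by
      rw [show (0 : WithTop ℤ) = ((0 : ℤ) : WithTop ℤ) from rfl, WithTop.coe_lt_coe]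
      omega
    exact absurd (lt_of_le_of_lt this hlt) (not_lt.mpr hc)
  -- existence by strong induction on the pole order
  have hex : ∀ n : ℕ, ∀ m : LaurentSeries k, ((-(n : ℤ) : ℤ) : WithTop ℤ) ≤ m.orderTop →
      ∃ c : {j : ℕ // 0 < j ∧ ¬ p ∣ j} →₀ Polynomial k,
        0 ≤ (m - Tfun p ξ c).orderTop := by
    intro n
    induction n with
    | zero =>
      intro m hm
      exact ⟨0, by simpa [Tfun_zero] using hm⟩
    | succ n IH =>
      intro m hm
      by_cases h : ((-(n : ℤ) : ℤ) : WithTop ℤ) ≤ m.orderTop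
      · exact IH m h
      push_neg at h
      have hm0 : m ≠ 0 := by
        intro h0; rw [h0, HahnSeries.orderTop_zero] at h; exact absurd h (by simp)
      have hordTop : m.orderTop = ((m.order : ℤ) : WithTop ℤ) :=
        (HahnSeries.order_eq_orderTop_of_ne_zero hm0).symm
      have hord : m.order = -((n : ℤ) + 1) := by
        rw [hordTop] at h hm
        rw [WithTop.coe_lt_coe] at h
        rw [WithTop.coe_le_coe] at hm
        omega
      set N : ℕ := n + 1 with hN
      set i : ℕ := N.factorization p with hi
      set j : ℕ := N / p ^ i with hj
      have hjpos : 0 < j := Nat.ordCompl_pos p (by omega)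
      have hjnd : ¬ p ∣ j := Nat.not_dvd_ordCompl hp (by omega)
      have hjN : j * p ^ i = N := by
        rw [hj, hi, mul_comm]
        exact Nat.ordProj_mul_ordCompl_eq_self N p
      set j₀ : {j : ℕ // 0 < j ∧ ¬ p ∣ j} := ⟨j, hjpos, hjnd⟩ with hj₀
      set x : LaurentSeries k := ξ j₀ ^ (p ^ i) with hx
      have hxne : x ≠ 0 := (hpow j₀ i).1
      have hxord : x.order = -((N : ℕ) : ℤ) := by
        rw [hx, (hpow j₀ i).2]
        congr 1
        exact_mod_cast congrArg (Nat.cast : ℕ → ℤ) hjN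
      set w : k := x.coeff (-((N : ℕ) : ℤ)) with hw
      have hwne : w ≠ 0 := by
        have := HahnSeries.coeff_order_eq_zero.not.mpr hxne
        rwa [hxord] at this
      set a : k := m.coeff (-((N : ℕ) : ℤ)) / w with ha
      set m' : LaurentSeries k := m - HahnSeries.C a * x with hm'
      have hm'coeff : ∀ g : ℤ, g ≤ -((N : ℕ) : ℤ) → m'.coeff g = 0 := by
        intro g hg
        rw [hm', HahnSeries.coeff_sub, C_mul_coeff]
        rcases lt_or_eq_of_le hg with hlt | heq
        · rw [HahnSeries.coeff_eq_zero_of_lt_order, HahnSeries.coeff_eq_zero_of_lt_order]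
          · ring
          · rw [hxord]; exact hlt
          · rw [hord]; push_cast; omega
        · subst heq
          rw [ha, ← hw, div_mul_cancel₀ _ hwne]
          ring
      have hm'ord : ((-(n : ℤ) : ℤ) : WithTop ℤ) ≤ m'.orderTop := by
        by_cases hz : m' = 0
        · rw [hz, HahnSeries.orderTop_zero]; exact le_top
        rw [← HahnSeries.order_eq_orderTop_of_ne_zero hz, WithTop.coe_le_coe]
        by_contra hcon
        push_neg at hcon
        have : m'.order ≤ -((N : ℕ) : ℤ) := by push_cast; omega
        exact (HahnSeries.coeff_order_eq_zero.not.mpr hz) (hm'coeff _ this)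
      obtain ⟨c', hc'⟩ := IH m' hm'ord
      refine ⟨c' + Finsupp.single j₀ (Polynomial.monomial i a), ?_⟩
      have hTeq : Tfun p ξ (c' + Finsupp.single j₀ (Polynomial.monomial i a)) =
          Tfun p ξ c' + HahnSeries.C a * x := by
        rw [Tfun_add, Tfun_single, twistedPolyAct_monomial]
      rw [hTeq]
      have : m - (Tfun p ξ c' + HahnSeries.C a * x) = m' - Tfun p ξ c' := by
        rw [hm']; ring
      rw [this]
      exact hc'
  -- conclusion
  intro m
  obtain ⟨c, hcex⟩ : ∃ c : {j : ℕ // 0 < j ∧ ¬ p ∣ j} →₀ Polynomial k,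
      0 ≤ (m - Tfun p ξ c).orderTop := by
    by_cases hz : m = 0
    · exact hex 0 m (by rw [hz, HahnSeries.orderTop_zero]; exact le_top)
    · refine hex m.order.natAbs m ?_
      rw [← HahnSeries.order_eq_orderTop_of_ne_zero hz, WithTop.coe_le_coe]
      rcases Int.natAbs_eq m.order with h | h <;> omega
  refine ⟨c, hcex, ?_⟩
  intro c' hc'
  have hdiff : 0 ≤ (Tfun p ξ c' - Tfun p ξ c).orderTop := by
    have heq : Tfun p ξ c' - Tfun p ξ c =
        (m - Tfun p ξ c) - (m - Tfun p ξ c') := by ring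
    rw [heq]
    exact le_trans (le_min hcex hc') HahnSeries.min_orderTop_le_orderTop_sub
  have := huniq (c' - c) (by rwa [Tfun_sub])
  exact sub_eq_zero.mp this
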